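/- Let A, B ⊆ ℝⁿ be closed convex sets with A ∩ B ≠ ∅ and let z ∈ ℝⁿ. Then for every s ∈ A ∩ B, ‖T_{A,B}(z) − s‖² ≤ ‖z − s‖² − (1/8)‖z − T_{A,B}(z)‖². -/

import Mathlib

noncomputable section

open Filter Metric RealInnerProductSpace

/-- Euclidean space ℝⁿ. -/
abbrev Euc (n : ℕ) := EuclideanSpace ℝ (Fin n)

/-- `P` is the metric projection onto `A`: `P x` is a point of `A` nearest to `x`. -/
def IsProjection {n : ℕ} (A : Set (Euc n)) (P : Euc n → Euc n) : Prop :=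
  ∀ x, P x ∈ A ∧ ∀ a ∈ A, ‖x - P x‖ ≤ ‖x - a‖

/-- Reflection `R_A = 2 P_A - Id`, given the projection `P = P_A`. -/
def reflect {n : ℕ} (P : Euc n → Euc n) (x : Euc n) : Euc n := (2 : ℝ) • P x - x

/-- `Z̄_{A,B} = Z̃_{A,B} ∘ Z_{A,B}`, where `Z_{A,B} = P_A ∘ P_B` and
`Z̃_{A,B} = (1/2)(P_A + P_B)`. -/
def Zbar {n : ℕ} (PA PB : Euc n → Euc n) (x : Euc n) : Euc n :=
  (2⁻¹ : ℝ) • (PA (PA (PB x)) + PB (PA (PB x)))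

/-- `c` is the circumcenter of `w`, `R_A w`, `R_B w`: it lies in the affine hull of these
three points and is equidistant from them. -/
def IsCircumcenter {n : ℕ} (PA PB : Euc n → Euc n) (w c : Euc n) : Prop :=
  c ∈ affineSpan ℝ ({w, reflect PA w, reflect PB w} : Set (Euc n)) ∧
    ‖c - w‖ = ‖c - reflect PA w‖ ∧ ‖c - w‖ = ‖c - reflect PB w‖


lemma norm_proj_eq_iInf {n : ℕ} {A : Set (Euc n)} {PA : Euc n → Euc n}
    (hPA : IsProjection A PA) (x : Euc n) : ‖x - PA x‖ = ⨅ w : A, ‖x - w‖ := by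
  haveI : Nonempty ↑A := ⟨⟨PA x, (hPA x).1⟩⟩
  refine le_antisymm (le_ciInf fun w => (hPA x).2 w w.2) ?_
  have hb : BddBelow (Set.range fun w : A => ‖x - (w : Euc n)‖) :=
    ⟨0, by rintro b ⟨i, rfl⟩; exact norm_nonneg _⟩
  exact ciInf_le hb ⟨PA x, (hPA x).1⟩

lemma obtuse {n : ℕ} {A : Set (Euc n)} (hAcv : Convex ℝ A) {PA : Euc n → Euc n}
    (hPA : IsProjection A PA) (x : Euc n) {a : Euc n} (ha : a ∈ A) :
    ⟪x - PA x, a - PA x⟫ ≤ 0 :=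
  (norm_eq_iInf_iff_real_inner_le_zero hAcv (hPA x).1).1 (norm_proj_eq_iInf hPA x) a ha

lemma firm {n : ℕ} {A : Set (Euc n)} (hAcv : Convex ℝ A) {PA : Euc n → Euc n}
    (hPA : IsProjection A PA) (x : Euc n) {s : Euc n} (hs : s ∈ A) :
    ‖PA x - s‖ ^ 2 + ‖x - PA x‖ ^ 2 ≤ ‖x - s‖ ^ 2 := by
  have h := obtuse hAcv hPA x hs
  have hx : x - s = (x - PA x) + (PA x - s) := by abel
  have hinner : ⟪x - PA x, PA x - s⟫ = -⟪x - PA x, s - PA x⟫ := by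
    rw [show PA x - s = -(s - PA x) by abel, inner_neg_right]
  rw [hx, norm_add_sq_real]
  linarith

lemma sq_norm_add_le {n : ℕ} (x y : Euc n) : ‖x + y‖ ^ 2 ≤ 2 * ‖x‖ ^ 2 + 2 * ‖y‖ ^ 2 := by
  have h1 := norm_add_sq_real x y
  have h2 := norm_sub_sq_real x y
  nlinarith [sq_nonneg ‖x - y‖]

lemma span_pair_self_orth_zero {n : ℕ} {u v q : Euc n}
    (hq : q ∈ Submodule.span ℝ ({u, v} : Set (Euc n)))
    (h1 : ⟪q, u⟫ = 0) (h2 : ⟪q, v⟫ = 0) : q = 0 := by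
  obtain ⟨s, t, hst⟩ := Submodule.mem_span_pair.1 hq
  have hqq : ⟪q, q⟫ = 0 := by
    nth_rewrite 2 [← hst]
    rw [inner_add_right, real_inner_smul_right, real_inner_smul_right, h1, h2]
    ring
  exact inner_self_eq_zero.1 hqq

lemma exists_coeffs (a b g : ℝ) (ha : 0 ≤ a) (hb : 0 ≤ b) (hg : g ≤ 0)
    (hCS : g * g ≤ a * b) (hD : a * b - g * g = 0 → a = 0 ∨ b = 0) :
    ∃ α β : ℝ, 0 ≤ α ∧ 0 ≤ β ∧ α * a + β * g = a ∧ α * g + β * b = b := by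
  rcases eq_or_lt_of_le ha with haz | hap
  · have hg0 : g = 0 := by nlinarith
    rcases eq_or_lt_of_le hb with hbz | hbp
    · exact ⟨0, 0, le_refl _, le_refl _, by nlinarith, by nlinarith⟩
    · exact ⟨0, 1, le_refl _, zero_le_one, by nlinarith, by nlinarith⟩
  · rcases eq_or_lt_of_le hb with hbz | hbp
    · have hg0 : g = 0 := by nlinarith
      exact ⟨1, 0, zero_le_one, le_refl _, by nlinarith, by nlinarith⟩
    · have hDp : 0 < a * b - g * g := by
        rcases lt_or_eq_of_le (by linarith : 0 ≤ a * b - g * g) with h | h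
        · exact h
        · rcases hD h.symm with h' | h' <;> linarith
      refine ⟨b * (a - g) / (a * b - g * g), a * (b - g) / (a * b - g * g), ?_, ?_, ?_, ?_⟩
      · apply div_nonneg _ (le_of_lt hDp); nlinarith
      · apply div_nonneg _ (le_of_lt hDp); nlinarith
      · rw [div_mul_eq_mul_div, div_mul_eq_mul_div, ← add_div, div_eq_iff hDp.ne']; ring
      · rw [div_mul_eq_mul_div, div_mul_eq_mul_div, ← add_div, div_eq_iff hDp.ne']; ring

lemma cone_le {n : ℕ} (u v p r : Euc n) (hg : ⟪u, v⟫ ≤ 0)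
    (hp : p ∈ Submodule.span ℝ ({u, v} : Set (Euc n)))
    (hpu : ⟪p, u⟫ = ‖u‖ ^ 2) (hpv : ⟪p, v⟫ = ‖v‖ ^ 2)
    (hru : ⟪r, u⟫ ≤ 0) (hrv : ⟪r, v⟫ ≤ 0) : ⟪r, p⟫ ≤ 0 := by
  have hu_mem : u ∈ Submodule.span ℝ ({u, v} : Set (Euc n)) :=
    Submodule.subset_span (by simp)
  have hv_mem : v ∈ Submodule.span ℝ ({u, v} : Set (Euc n)) :=
    Submodule.subset_span (by simp)
  have hCS : ⟪u, v⟫ * ⟪u, v⟫ ≤ ‖u‖ ^ 2 * ‖v‖ ^ 2 := by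
    have := real_inner_mul_inner_self_le u v
    rwa [real_inner_self_eq_norm_sq, real_inner_self_eq_norm_sq] at this
  have hD : ‖u‖ ^ 2 * ‖v‖ ^ 2 - ⟪u, v⟫ * ⟪u, v⟫ = 0 → ‖u‖ ^ 2 = 0 ∨ ‖v‖ ^ 2 = 0 := by
    intro hdz
    by_contra hcon
    push_neg at hcon
    obtain ⟨hA, hB⟩ := hcon
    have hap : 0 < ‖u‖ ^ 2 := lt_of_le_of_ne (sq_nonneg _) (Ne.symm hA)
    have hbp : 0 < ‖v‖ ^ 2 := lt_of_le_of_ne (sq_nonneg _) (Ne.symm hB)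
    have hsq : ‖(‖u‖ ^ 2) • v - ⟪u, v⟫ • u‖ ^ 2 = 0 := by
      rw [norm_sub_sq_real, norm_smul, norm_smul, real_inner_smul_left,
        real_inner_smul_right]
      simp only [mul_pow, sq_abs, Real.norm_eq_abs]
      rw [real_inner_comm u v]
      nlinarith
    have hav : (‖u‖ ^ 2) • v - ⟪u, v⟫ • u = 0 := by
      rw [← norm_eq_zero]
      nlinarith [norm_nonneg ((‖u‖ ^ 2) • v - ⟪u, v⟫ • u)]
    have hz : ⟪p, (‖u‖ ^ 2) • v - ⟪u, v⟫ • u⟫ = 0 := by rw [hav, inner_zero_right]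
    rw [inner_sub_right, real_inner_smul_right, real_inner_smul_right, hpu, hpv] at hz
    -- ‖u‖²‖v‖² = ⟪u,v⟫‖u‖² ⇒ ‖v‖² = ⟪u,v⟫ ≤ 0, contradiction
    nlinarith
  obtain ⟨α, β, hα, hβ, he1, he2⟩ :=
    exists_coeffs (‖u‖ ^ 2) (‖v‖ ^ 2) ⟪u, v⟫ (sq_nonneg _) (sq_nonneg _) hg hCS hD
  have hq : p - (α • u + β • v) = 0 := by
    refine span_pair_self_orth_zero
      (Submodule.sub_mem _ hp (Submodule.add_mem _
        (Submodule.smul_mem _ _ hu_mem) (Submodule.smul_mem _ _ hv_mem))) ?_ ?_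
    · rw [inner_sub_left, inner_add_left, real_inner_smul_left, real_inner_smul_left,
        hpu, real_inner_self_eq_norm_sq, real_inner_comm u v]
      linarith
    · rw [inner_sub_left, inner_add_left, real_inner_smul_left, real_inner_smul_left,
        hpv, real_inner_self_eq_norm_sq]
      linarith
  have hpe : p = α • u + β • v := sub_eq_zero.1 hq
  rw [hpe, inner_add_right, real_inner_smul_right, real_inner_smul_right]
  have h1 : α * ⟪r, u⟫ ≤ 0 := mul_nonpos_of_nonneg_of_nonpos hα hru
  have h2 : β * ⟪r, v⟫ ≤ 0 := mul_nonpos_of_nonneg_of_nonpos hβ hrv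
  linarith

set_option maxHeartbeats 1600000 in
/-- The cCRM operator satisfies `‖T_{A,B}(z) - s‖² ≤ ‖z - s‖² - (1/8)‖z - T_{A,B}(z)‖²`
for all `s ∈ A ∩ B`. -/
theorem stmt4 {n : ℕ} (A B : Set (Euc n))
    (hAcl : IsClosed A) (hAcv : Convex ℝ A) (hBcl : IsClosed B) (hBcv : Convex ℝ B)
    (hAB : (A ∩ B).Nonempty)
    (PA PB : Euc n → Euc n) (hPA : IsProjection A PA) (hPB : IsProjection B PB)
    (z Tz : Euc n) (hT : IsCircumcenter PA PB (Zbar PA PB z) Tz) :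
    ∀ s ∈ A ∩ B, ‖Tz - s‖ ^ 2 ≤ ‖z - s‖ ^ 2 - (1 / 8) * ‖z - Tz‖ ^ 2 := by
  intro s hs
  obtain ⟨hsA, hsB⟩ := hs
  obtain ⟨q, hq⟩ : ∃ q : Euc n, PB z = q := ⟨_, rfl⟩
  obtain ⟨y, hy⟩ : ∃ y : Euc n, PA q = y := ⟨_, rfl⟩
  obtain ⟨b0, hb0⟩ : ∃ b0 : Euc n, PB y = b0 := ⟨_, rfl⟩
  obtain ⟨w, hwdef⟩ : ∃ w : Euc n, Zbar PA PB z = w := ⟨_, rfl⟩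
  rw [hwdef] at hT
  obtain ⟨u, hu⟩ : ∃ u : Euc n, w - PA w = u := ⟨_, rfl⟩
  obtain ⟨v, hv⟩ : ∃ v : Euc n, w - PB w = v := ⟨_, rfl⟩
  obtain ⟨hc_mem, hceqA, hceqB⟩ := hT
  have hyA : y ∈ A := hy ▸ (hPA q).1
  have hb0B : b0 ∈ B := hb0 ▸ (hPB y).1
  have hfix : PA y = y := by
    have h := (hPA y).2 y hyA
    rw [sub_self, norm_zero] at h
    have h0 : ‖y - PA y‖ = 0 := le_antisymm h (norm_nonneg _)
    exact (sub_eq_zero.mp (norm_eq_zero.mp h0)).symm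
  have hw : w = (2⁻¹ : ℝ) • (y + b0) := by
    rw [← hwdef]
    simp only [Zbar]
    rw [hq, hy, hfix, hb0]
  -- midpoint identities
  have hwd : w - b0 = y - w := by rw [hw]; module
  have hyb : y - b0 = (y - w) + (y - w) := by
    have h : y - b0 = (w - b0) + (y - w) := by rw [hw]; module
    rw [h, hwd]
  obtain ⟨d, hd⟩ : ∃ d : Euc n, y - w = d := ⟨_, rfl⟩
  -- v = d
  have hvd : v = d := by
    have h1 : ‖v‖ ≤ ‖d‖ := by
      rw [← hv, ← hd, ← hwd]
      exact (hPB w).2 b0 hb0B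
    have h2 : ⟪y - b0, PB w - b0⟫ ≤ 0 := by
      have h := obtuse hBcv hPB y (hPB w).1
      rwa [hb0] at h
    have h3 : PB w - b0 = d - v := by
      rw [← hv, ← hd, ← hwd]; module
    rw [hyb, hd, h3, inner_add_left, inner_sub_right,
      real_inner_self_eq_norm_sq] at h2
    have hsq : ‖v‖ ^ 2 ≤ ‖d‖ ^ 2 := by
      nlinarith [norm_nonneg v, norm_nonneg d]
    have h4 : ‖v - d‖ ^ 2 ≤ 0 := by
      rw [norm_sub_sq_real]
      have hcm : ⟪v, d⟫ = ⟪d, v⟫ := real_inner_comm _ _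
      linarith
    have h5 : v - d = 0 := by
      rw [← norm_eq_zero]
      nlinarith [norm_nonneg (v - d)]
    exact sub_eq_zero.mp h5
  -- centralization: ⟪u, v⟫ ≤ 0
  have hud : ⟪u, d⟫ ≤ -‖u‖ ^ 2 := by
    have h := obtuse hAcv hPA w hyA
    rw [hu, show y - PA w = d + u from by rw [← hu, ← hd]; module,
      inner_add_right, real_inner_self_eq_norm_sq] at h
    linarith
  have hg : ⟪u, v⟫ ≤ 0 := by
    rw [hvd]
    have h := sq_nonneg ‖u‖
    linarith
  -- circumcenter equations
  have hsmulnorm : ∀ x : Euc n, ‖(2 : ℝ) • x‖ ^ 2 = 4 * ‖x‖ ^ 2 := by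
    intro x; rw [norm_smul]; simp; ring
  have hpu : ⟪w - Tz, u⟫ = ‖u‖ ^ 2 := by
    have hrA : Tz - reflect PA w = (Tz - w) + (2 : ℝ) • u := by
      simp only [reflect]; rw [← hu]; module
    have h2 : ‖Tz - w‖ ^ 2 = ‖(Tz - w) + (2 : ℝ) • u‖ ^ 2 := by
      rw [← hrA, ← hceqA]
    rw [norm_add_sq_real, real_inner_smul_right, hsmulnorm] at h2
    have h4 : ⟪Tz - w, u⟫ = -‖u‖ ^ 2 := by linarith
    rw [show w - Tz = -(Tz - w) from (neg_sub Tz w).symm, inner_neg_left, h4]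
    ring
  have hpv : ⟪w - Tz, v⟫ = ‖v‖ ^ 2 := by
    have hrB : Tz - reflect PB w = (Tz - w) + (2 : ℝ) • v := by
      simp only [reflect]; rw [← hv]; module
    have h2 : ‖Tz - w‖ ^ 2 = ‖(Tz - w) + (2 : ℝ) • v‖ ^ 2 := by
      rw [← hrB, ← hceqB]
    rw [norm_add_sq_real, real_inner_smul_right, hsmulnorm] at h2
    have h4 : ⟪Tz - w, v⟫ = -‖v‖ ^ 2 := by linarith
    rw [show w - Tz = -(Tz - w) from (neg_sub Tz w).symm, inner_neg_left, h4]
    ring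
  -- span membership
  have hTw : Tz - w ∈ vectorSpan ℝ ({w, reflect PA w, reflect PB w} : Set (Euc n)) := by
    have h1 : w ∈ affineSpan ℝ ({w, reflect PA w, reflect PB w} : Set (Euc n)) :=
      mem_affineSpan ℝ (by simp)
    have h2 := AffineSubspace.vsub_mem_direction hc_mem h1
    rwa [direction_affineSpan] at h2
  have hle : vectorSpan ℝ ({w, reflect PA w, reflect PB w} : Set (Euc n)) ≤
      Submodule.span ℝ ({u, v} : Set (Euc n)) := by
    rw [vectorSpan_eq_span_vsub_set_right ℝ
      (show w ∈ ({w, reflect PA w, reflect PB w} : Set (Euc n)) by simp)]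
    rw [Submodule.span_le]
    rintro x ⟨y0, hy0, rfl⟩
    simp only [Set.mem_insert_iff, Set.mem_singleton_iff] at hy0
    rcases hy0 with h0 | h0 | h0
    · have h : w -ᵥ w = (0 : Euc n) := by simp
      dsimp only
      rw [SetLike.mem_coe, h0, h]
      exact Submodule.zero_mem _
    · have h : reflect PA w -ᵥ w = (-2 : ℝ) • u := by
        simp only [vsub_eq_sub, reflect]; rw [← hu]; module
      dsimp only
      rw [SetLike.mem_coe, h0, h]
      exact Submodule.smul_mem _ _ (Submodule.subset_span (by simp))
    · have h : reflect PB w -ᵥ w = (-2 : ℝ) • v := by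
        simp only [vsub_eq_sub, reflect]; rw [← hv]; module
      dsimp only
      rw [SetLike.mem_coe, h0, h]
      exact Submodule.smul_mem _ _ (Submodule.subset_span (by simp))
  have hspan : w - Tz ∈ Submodule.span ℝ ({u, v} : Set (Euc n)) := by
    have h1 : Tz - w ∈ Submodule.span ℝ ({u, v} : Set (Euc n)) := hle hTw
    have h2 := Submodule.neg_mem _ h1
    rwa [neg_sub] at h2
  -- ⟪s - Tz, u⟫ ≤ 0 and ⟪s - Tz, v⟫ ≤ 0
  have hru : ⟪s - Tz, u⟫ ≤ 0 := by
    have ho := obtuse hAcv hPA w hsA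
    rw [hu, show s - PA w = (s - w) + u from by rw [← hu]; module,
      inner_add_right, real_inner_self_eq_norm_sq] at ho
    have hsplit : ⟪s - Tz, u⟫ = ⟪s - w, u⟫ + ⟪w - Tz, u⟫ := by
      rw [show s - Tz = (s - w) + (w - Tz) from by abel, inner_add_left]
    rw [hsplit, hpu]
    have hcm : ⟪s - w, u⟫ = ⟪u, s - w⟫ := real_inner_comm _ _
    linarith
  have hrv : ⟪s - Tz, v⟫ ≤ 0 := by
    have ho := obtuse hBcv hPB w hsB
    rw [hv, show s - PB w = (s - w) + v from by rw [← hv]; module,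
      inner_add_right, real_inner_self_eq_norm_sq] at ho
    have hsplit : ⟪s - Tz, v⟫ = ⟪s - w, v⟫ + ⟪w - Tz, v⟫ := by
      rw [show s - Tz = (s - w) + (w - Tz) from by abel, inner_add_left]
    rw [hsplit, hpv]
    have hcm : ⟪s - w, v⟫ = ⟪v, s - w⟫ := real_inner_comm _ _
    linarith
  have hkey : ⟪s - Tz, w - Tz⟫ ≤ 0 :=
    cone_le u v (w - Tz) (s - Tz) hg hspan hpu hpv hru hrv
  -- Step 4: circumcenter descent
  have h4 : ‖Tz - s‖ ^ 2 + ‖w - Tz‖ ^ 2 ≤ ‖w - s‖ ^ 2 := by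
    have hws : w - s = (w - Tz) + (Tz - s) := by abel
    have hexp := norm_add_sq_real (w - Tz) (Tz - s)
    rw [← hws] at hexp
    have hinner : ⟪w - Tz, Tz - s⟫ = -⟪s - Tz, w - Tz⟫ := by
      rw [show Tz - s = -(s - Tz) from (neg_sub s Tz).symm, inner_neg_right,
        real_inner_comm]
    linarith
  -- Step 3: midpoint descent
  have hfb : ‖b0 - s‖ ^ 2 + ‖y - b0‖ ^ 2 ≤ ‖y - s‖ ^ 2 := by
    have h := firm hBcv hPB y hsB
    rwa [hb0] at h
  have h3 : ‖w - s‖ ^ 2 + ‖d‖ ^ 2 ≤ ‖y - s‖ ^ 2 := by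
    have hws2 : w - s = (2⁻¹ : ℝ) • ((y - s) + (b0 - s)) := by rw [hw]; module
    have hyw2 : d = (2⁻¹ : ℝ) • (y - b0) := by rw [← hd, hw]; module
    have e1 : ‖w - s‖ ^ 2 = (1 / 4) * ‖(y - s) + (b0 - s)‖ ^ 2 := by
      rw [hws2, norm_smul]; simp; ring
    have e2 : ‖d‖ ^ 2 = (1 / 4) * ‖y - b0‖ ^ 2 := by
      rw [hyw2, norm_smul]; simp; ring
    have e3 := sq_norm_add_le (y - s) (b0 - s)
    linarith [sq_nonneg ‖y - b0‖]
  -- Steps 1,2: projection descents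
  have h1 : ‖q - s‖ ^ 2 + ‖z - q‖ ^ 2 ≤ ‖z - s‖ ^ 2 := by
    have h := firm hBcv hPB z hsB
    rwa [hq] at h
  have h2 : ‖y - s‖ ^ 2 + ‖q - y‖ ^ 2 ≤ ‖q - s‖ ^ 2 := by
    have h := firm hAcv hPA q hsA
    rwa [hy] at h
  -- path inequality
  have h8 : ‖z - Tz‖ ^ 2 ≤
      4 * (‖z - q‖ ^ 2 + ‖q - y‖ ^ 2 + ‖d‖ ^ 2 + ‖w - Tz‖ ^ 2) := by
    have a1 := sq_norm_add_le (z - q) (q - y)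
    have a2 := sq_norm_add_le d (w - Tz)
    have a3 := sq_norm_add_le ((z - q) + (q - y)) (d + (w - Tz))
    have hpath : (z - q) + (q - y) + (d + (w - Tz)) = z - Tz := by rw [← hd]; abel
    rw [hpath] at a3
    linarith
  linarith [sq_nonneg ‖z - Tz‖]
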